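/- Let V be a finite set with n elements, n > 2N, let S̄ ⊆ V with |S̄| = N, and define g(S) = min{1 + |S ∩ S̄|, |S|} for S ⊆ V. Then g is submodular: g(S∪{v}) − g(S) ≥ g(T∪{v}) − g(T) for all S ⊆ T ⊆ V and v ∈ V \ T. -/
import Mathlib


/-- The function `g(S) = min(1 + |S ∩ S̄|, |S|)` is submodular. -/
theorem min_card_submodular {V : Type*} [DecidableEq V] [Fintype V]
    (n N : ℕ) (hn : Fintype.card V = n) (h2N : 2 * N < n)
    (Sbar : Finset V) (hSbar : Sbar.card = N) :
    ∀ (S T : Finset V) (v : V), S ⊆ T → v ∉ T →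
      ((min (1 + ((insert v S) ∩ Sbar).card) (insert v S).card : ℤ)
          - (min (1 + (S ∩ Sbar).card) S.card : ℤ))
        ≥ ((min (1 + ((insert v T) ∩ Sbar).card) (insert v T).card : ℤ)
          - (min (1 + (T ∩ Sbar).card) T.card : ℤ)) := by
  intro S T v hST hvT
  have hvS : v ∉ S := fun h => hvT (hST h)
  have hS1 : (insert v S).card = S.card + 1 := Finset.card_insert_of_notMem hvS
  have hT1 : (insert v T).card = T.card + 1 := Finset.card_insert_of_notMem hvT
  have hS2 : (S ∩ Sbar).card + (S \ Sbar).card = S.card :=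
    Finset.card_inter_add_card_sdiff S Sbar
  have hT2 : (T ∩ Sbar).card + (T \ Sbar).card = T.card :=
    Finset.card_inter_add_card_sdiff T Sbar
  have hmono : (S \ Sbar).card ≤ (T \ Sbar).card :=
    Finset.card_le_card (Finset.sdiff_subset_sdiff hST le_rfl)
  by_cases hv : v ∈ Sbar
  · have eS : ((insert v S) ∩ Sbar).card = (S ∩ Sbar).card + 1 := by
      rw [Finset.insert_inter_of_mem hv,
        Finset.card_insert_of_notMem (by simp [hvS])]
    have eT : ((insert v T) ∩ Sbar).card = (T ∩ Sbar).card + 1 := by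
      rw [Finset.insert_inter_of_mem hv,
        Finset.card_insert_of_notMem (by simp [hvT])]
    rw [eS, eT, hS1, hT1]
    push_cast
    omega
  · have eS : ((insert v S) ∩ Sbar).card = (S ∩ Sbar).card := by
      rw [Finset.insert_inter_of_notMem hv]
    have eT : ((insert v T) ∩ Sbar).card = (T ∩ Sbar).card := by
      rw [Finset.insert_inter_of_notMem hv]
    rw [eS, eT, hS1, hT1]
    push_cast
    omega
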